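/- (Theorem 3, converse direction) Suppose there exists a measurable selection a : W → 𝒳 for g, let P_s ∈ 𝒫 with coupling κ_s whose first marginal is ν_s, set ν_g := g_*ν_s, let I be a causal essential set for g, let φ : W → Z be a measurable pointwise conditional-risk minimizer with h_s := φ ∘ g, and assume E_{P_s}[L(h_s(X), Y)] < ∞. If a measurable model h* : 𝒳 → Z satisfies h* ∘ T = h* for all T ∈ I and E_{P_s}[L(h*(X), Y)] ≤ E_{P_s}[L(h_s(X), Y)], then there exists a measurable map v : W → Z such that h* = v ∘ g and, for ν_g-almost every w ∈ W, ∫⁻_U L(v(w), m(w, u)) dF(u) ≤ ∫⁻_U L(z, m(w, u)) dF(u) for every z ∈ Z; that is, every constrained risk minimizer factors through g via an almost-everywhere pointwise conditional-risk minimizer. -/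

import Mathlib

open MeasureTheory ENNReal

variable {𝒳 W U 𝒴 Z : Type*} [MeasurableSpace 𝒳] [MeasurableSpace W]
  [MeasurableSpace U] [MeasurableSpace 𝒴] [MeasurableSpace Z]

/-- `κ` is a coupling (the joint law of `(X, η)`) witnessing that `P` belongs to the
class `𝒫`: `κ` is a probability measure, the pushforward of `κ` under
`(x, u) ↦ (g x, u)` equals `(g_*ν) ⊗ F` where `ν` is the first marginal of `κ`
(encoding `η ∼ F` and `η ⟂ g(X)`), and `P` is the pushforward of `κ` under
`(x, u) ↦ (x, m (g x, u))` (encoding `Y = m(g(X), η)`). -/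
def IsCouplingFor (g : 𝒳 → W) (m : W × U → 𝒴) (F : Measure U)
    (κ : Measure (𝒳 × U)) (P : Measure (𝒳 × 𝒴)) : Prop :=
  IsProbabilityMeasure κ ∧
    κ.map (fun p : 𝒳 × U => (g p.1, p.2)) = ((κ.map Prod.fst).map g).prod F ∧
    P = κ.map (fun p : 𝒳 × U => (p.1, m (g p.1, p.2)))

/-- The class `𝒫` of distributions generated by the structural causal model. -/
def MemP (g : 𝒳 → W) (m : W × U → 𝒴) (F : Measure U) (P : Measure (𝒳 × 𝒴)) : Prop :=
  ∃ κ : Measure (𝒳 × U), IsCouplingFor g m F κ P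

/-- The risk `E_P[L(h(X), Y)]` of a model `h` under the distribution `P`. -/
noncomputable def risk (L : Z × 𝒴 → ℝ≥0∞) (h : 𝒳 → Z) (P : Measure (𝒳 × 𝒴)) : ℝ≥0∞ :=
  ∫⁻ p, L (h p.1, p.2) ∂P

/-- `φ : W → Z` is a pointwise conditional-risk minimizer: for every `w` and every `z`,
`∫⁻ L(φ w, m (w, u)) dF(u) ≤ ∫⁻ L(z, m (w, u)) dF(u)`. -/
def IsPointwiseCondRiskMin (L : Z × 𝒴 → ℝ≥0∞) (m : W × U → 𝒴) (F : Measure U)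
    (φ : W → Z) : Prop :=
  ∀ (w : W) (z : Z), ∫⁻ u, L (φ w, m (w, u)) ∂F ≤ ∫⁻ u, L (z, m (w, u)) ∂F

/-- A family `I` of transformations `T : X → X` is a causal essential set for `h` if
`h ∘ T = h` for every `T ∈ I`, and for all `x₁, x₂` with `h x₁ = h x₂` there are finitely
many `T₁, …, T_K ∈ I` such that `(T₁ ∘ ⋯ ∘ T_K) x₁ = x₂`. -/
def IsCausalEssentialSet {X V : Type*} (h : X → V) (I : Set (X → X)) : Prop :=
  (∀ T ∈ I, h ∘ T = h) ∧
    ∀ x₁ x₂ : X, h x₁ = h x₂ →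
      ∃ l : List (X → X), (∀ T ∈ l, T ∈ I) ∧ l.foldr (· ∘ ·) id x₁ = x₂

/-- Theorem 3, converse direction: under a measurable selection for `g`, `P_s ∈ 𝒫` with
coupling `κ_s` (first marginal `ν_s`, causal-feature law `ν_g = g_*ν_s`), a causal
essential set `I` for `g`, and `h_s = φ ∘ g` with finite risk for a measurable pointwise
conditional-risk minimizer `φ`: every measurable model `h*` that is invariant to `I` and
whose risk under `P_s` does not exceed that of `h_s` factors through `g` as `h* = v ∘ g`
for a measurable `v` which, for `ν_g`-almost every `w`, minimizes the conditional risk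
`z ↦ ∫⁻ L(z, m (w, u)) dF` over all `z`. -/
theorem stmt_11 (g : 𝒳 → W) (hg : Measurable g) (m : W × U → 𝒴) (hm : Measurable m)
    (F : Measure U) [IsProbabilityMeasure F] (L : Z × 𝒴 → ℝ≥0∞) (hL : Measurable L)
    (a : W → 𝒳) (ha : Measurable a) (hsel : ∀ x : 𝒳, g (a (g x)) = g x)
    (P_s : Measure (𝒳 × 𝒴)) (κ_s : Measure (𝒳 × U)) (hPs : IsCouplingFor g m F κ_s P_s)
    (I : Set (𝒳 → 𝒳)) (hI : IsCausalEssentialSet g I)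
    (φ : W → Z) (hφ : Measurable φ) (hmin : IsPointwiseCondRiskMin L m F φ)
    (hfin : risk L (φ ∘ g) P_s < ⊤)
    (hstar : 𝒳 → Z) (hms : Measurable hstar) (hinv : ∀ T ∈ I, hstar ∘ T = hstar)
    (hopt : risk L hstar P_s ≤ risk L (φ ∘ g) P_s) :
    ∃ v : W → Z, Measurable v ∧ hstar = v ∘ g ∧
      ∀ᵐ w ∂((κ_s.map Prod.fst).map g),
        ∀ z : Z, ∫⁻ u, L (v w, m (w, u)) ∂F ≤ ∫⁻ u, L (z, m (w, u)) ∂F := by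
  obtain ⟨hκprob, hκmap, hPdef⟩ := hPs
  -- hstar is constant on fibers of g
  have hfold : ∀ (l : List (𝒳 → 𝒳)), (∀ T ∈ l, T ∈ I) →
      ∀ x, hstar (l.foldr (· ∘ ·) id x) = hstar x := by
    intro l
    induction l with
    | nil => intro _ x; simp
    | cons T t ih =>
      intro h x
      have hT := hinv T (h T (List.mem_cons_self))
      have : hstar (T (t.foldr (· ∘ ·) id x)) = hstar (t.foldr (· ∘ ·) id x) :=
        congrFun hT _
      simpa [this] using ih (fun T' hT' => h T' (List.mem_cons_of_mem _ hT')) x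
  have hfib : ∀ x₁ x₂, g x₁ = g x₂ → hstar x₁ = hstar x₂ := by
    intro x₁ x₂ hgx
    obtain ⟨l, hl, hfl⟩ := hI.2 x₁ x₂ hgx
    rw [← hfl, hfold l hl x₁]
  set v : W → Z := hstar ∘ a with hv
  have hvmeas : Measurable v := hms.comp ha
  have hveq : hstar = v ∘ g := by
    funext x
    exact (hfib x (a (g x)) (hsel x).symm)
  refine ⟨v, hvmeas, hveq, ?_⟩
  set νg := (κ_s.map Prod.fst).map g with hνg
  -- risk computations
  have hmap1 : Measurable (fun p : 𝒳 × U => (p.1, m (g p.1, p.2))) :=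
    measurable_fst.prodMk (hm.comp ((hg.comp measurable_fst).prodMk measurable_snd))
  have hmap2 : Measurable (fun p : 𝒳 × U => (g p.1, p.2)) :=
    (hg.comp measurable_fst).prodMk measurable_snd
  have key : ∀ (ψ : W → Z), Measurable ψ →
      risk L (ψ ∘ g) P_s = ∫⁻ w, ∫⁻ u, L (ψ w, m (w, u)) ∂F ∂νg := by
    intro ψ hψ
    have hint : Measurable (fun q : W × U => L (ψ q.1, m q)) :=
      hL.comp ((hψ.comp measurable_fst).prodMk hm)
    have hintP : Measurable (fun q : 𝒳 × 𝒴 => L (ψ (g q.1), q.2)) :=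
      hL.comp (((hψ.comp hg).comp measurable_fst).prodMk measurable_snd)
    calc risk L (ψ ∘ g) P_s
        = ∫⁻ q, L (ψ (g q.1), q.2) ∂P_s := rfl
      _ = ∫⁻ p, L (ψ (g p.1), m (g p.1, p.2)) ∂κ_s := by
          rw [hPdef, lintegral_map hintP hmap1]
      _ = ∫⁻ q, L (ψ q.1, m q) ∂(κ_s.map (fun p : 𝒳 × U => (g p.1, p.2))) := by
          rw [lintegral_map hint hmap2]
      _ = ∫⁻ q, L (ψ q.1, m q) ∂(νg.prod F) := by rw [hκmap]
      _ = ∫⁻ w, ∫⁻ u, L (ψ w, m (w, u)) ∂F ∂νg := lintegral_prod _ hint.aemeasurable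
  have hriskφ := key φ hφ
  have hriskv := key v hvmeas
  have hriskstar : risk L hstar P_s = ∫⁻ w, ∫⁻ u, L (v w, m (w, u)) ∂F ∂νg := by
    rw [hveq]; exact hriskv
  set Gφ : W → ℝ≥0∞ := fun w => ∫⁻ u, L (φ w, m (w, u)) ∂F with hGφ
  set Gv : W → ℝ≥0∞ := fun w => ∫⁻ u, L (v w, m (w, u)) ∂F with hGv
  have hGφm : Measurable Gφ :=
    (hL.comp ((hφ.comp measurable_fst).prodMk hm)).lintegral_prod_right'
  have hGvm : Measurable Gv :=
    (hL.comp ((hvmeas.comp measurable_fst).prodMk hm)).lintegral_prod_right'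
  have hle : ∀ w, Gφ w ≤ Gv w := fun w => hmin w (v w)
  have hfin' : ∫⁻ w, Gφ w ∂νg ≠ ⊤ := by
    rw [← hriskφ]; exact hfin.ne
  have hopt' : ∫⁻ w, Gv w ∂νg ≤ ∫⁻ w, Gφ w ∂νg := by
    rw [← hriskφ, ← hriskstar]; exact hopt
  have hsub : ∫⁻ w, (Gv w - Gφ w) ∂νg = 0 := by
    rw [lintegral_sub hGφm hfin' (Filter.Eventually.of_forall hle)]
    exact tsub_eq_zero_of_le hopt'
  have hae : ∀ᵐ w ∂νg, Gv w - Gφ w = 0 :=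
    (lintegral_eq_zero_iff (hGvm.sub hGφm)).mp hsub
  filter_upwards [hae] with w hw z
  have : Gv w ≤ Gφ w := tsub_eq_zero_iff_le.mp hw
  exact le_trans this (hmin w z)
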